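/- arXiv:0808.3733 — 4 statements merged into one kernel-verified Lean document; each statement's English description precedes it below -/
import Mathlib

section
/- Let λ ∈ ρ(A_{αβ}). Then the closure in L²(0,1) ⊕ L²(0,1) of the image (A_{αβ} − λI)^{−1}( L²(0,1) ⊕ L²(𝒲) ) equals L²(0,1) ⊕ L²(𝒲). -/
open MeasureTheory Filter Set Topology
open scoped ENNReal Convolution

/-- Lebesgue measure restricted to `(0,1)`. -/
noncomputable def m01 : Measure ℝ := volume.restrict (Set.Ioo 0 1)

lemma m01_univ : m01 Set.univ = 1 := by
  simp [m01, Measure.restrict_apply_univ, Real.volume_Ioo]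

instance : IsFiniteMeasure m01 := ⟨by rw [m01_univ]; exact ENNReal.one_lt_top⟩

lemma m01_le_volume : m01 ≤ volume := Measure.restrict_le_self

-- bounded continuous with compact support is in L2(m01)
lemma memL2_of_continuous_compact {f : ℝ → ℂ} (hf : Continuous f) (hc : HasCompactSupport f) :
    MemLp f 2 m01 := by
  obtain ⟨C, hC⟩ := hc.exists_bound_of_continuous hf
  exact MemLp.of_bound (hf.aestronglyMeasurable.restrict) C (Eventually.of_forall hC)

-- Step A: continuous compactly supported approximation in L2(m01)
lemma approx_continuous (Y : Lp ℂ 2 m01) {ε : ℝ≥0∞} (hε : ε ≠ 0) :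
    ∃ f : ℝ → ℂ, Continuous f ∧ HasCompactSupport f ∧
      eLpNorm ((Y : ℝ → ℂ) - f) 2 m01 ≤ ε := by
  set Y' := (Lp.memLp Y).aestronglyMeasurable.mk _ with hY'
  have hsm : StronglyMeasurable Y' := (Lp.memLp Y).aestronglyMeasurable.stronglyMeasurable_mk
  have hYY' : (Y : ℝ → ℂ) =ᵐ[m01] Y' := (Lp.memLp Y).aestronglyMeasurable.ae_eq_mk
  set f₀ : ℝ → ℂ := (Set.Ioo (0:ℝ) 1).indicator Y' with hf₀
  have hmem : MemLp f₀ 2 volume := by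
    constructor
    · exact (hsm.indicator measurableSet_Ioo).aestronglyMeasurable
    · rw [eLpNorm_indicator_eq_eLpNorm_restrict measurableSet_Ioo]
      have : eLpNorm Y' 2 m01 = eLpNorm (Y : ℝ → ℂ) 2 m01 := eLpNorm_congr_ae hYY'.symm
      rw [show volume.restrict (Set.Ioo (0:ℝ) 1) = m01 from rfl, this]
      exact (Lp.memLp Y).2
  obtain ⟨f, hfc, hsub, hcont, _⟩ :=
    hmem.exists_hasCompactSupport_eLpNorm_sub_le (by norm_num : (2:ℝ≥0∞) ≠ ∞) hε
  refine ⟨f, hcont, hfc, ?_⟩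
  have h1 : (Y : ℝ → ℂ) - f =ᵐ[m01] f₀ - f := by
    have h0 : f₀ =ᵐ[m01] Y' := by
      filter_upwards [ae_restrict_mem measurableSet_Ioo] with x hx
      simp [hf₀, Set.indicator_of_mem hx]
    filter_upwards [hYY', h0] with x h1 h2
    simp [h1, h2]
  calc eLpNorm ((Y : ℝ → ℂ) - f) 2 m01 = eLpNorm (f₀ - f) 2 m01 := eLpNorm_congr_ae h1
    _ ≤ eLpNorm (f₀ - f) 2 volume := eLpNorm_mono_measure _ m01_le_volume
    _ ≤ ε := hsub

-- Step B: cutoff near the endpoints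
lemma approx_cutoff {f : ℝ → ℂ} (hf : Continuous f) (hc : HasCompactSupport f)
    {ε : ℝ} (hε : 0 < ε) :
    ∃ (h : ℝ → ℂ) (δ : ℝ), 0 < δ ∧ δ < 1/2 ∧ Continuous h ∧ HasCompactSupport h ∧
      (∀ x, x ≤ δ → h x = 0) ∧ (∀ x, 1 - δ ≤ x → h x = 0) ∧
      eLpNorm (f - h) 2 m01 ≤ ENNReal.ofReal ε := by
  obtain ⟨M, hM⟩ := hc.exists_bound_of_continuous hf
  have hM0 : 0 ≤ M := le_trans (norm_nonneg _) (hM 0)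
  set t : ℝ := ε / (M + 1) with ht
  have ht0 : 0 < t := div_pos hε (by linarith)
  set δ : ℝ := min (1/8) (t^2/4) with hδ
  have hδ0 : 0 < δ := lt_min (by norm_num) (by positivity)
  have hδ2 : δ < 1/2 := lt_of_le_of_lt (min_le_left _ _) (by norm_num)
  set cut : ℝ → ℝ := fun x => max 0 (min 1 (min ((x - δ)/δ) ((1 - δ - x)/δ))) with hcut
  have hcutc : Continuous cut := by
    apply continuous_const.max
    exact continuous_const.min (((continuous_id.sub continuous_const).div_const _).min
      ((continuous_const.sub continuous_id).div_const _))
  have hcut01 : ∀ x, 0 ≤ cut x ∧ cut x ≤ 1 := fun x => ⟨le_max_left _ _, by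
    simp only [hcut, max_le_iff]
    exact ⟨by norm_num, le_trans (min_le_left _ _) le_rfl⟩⟩
  have hcut_one : ∀ x, 2*δ ≤ x → x ≤ 1 - 2*δ → cut x = 1 := by
    intro x h1 h2
    have ha : (1:ℝ) ≤ (x - δ)/δ := (le_div_iff₀ hδ0).2 (by linarith)
    have hb : (1:ℝ) ≤ (1 - δ - x)/δ := (le_div_iff₀ hδ0).2 (by linarith)
    simp only [hcut]
    rw [min_eq_left (le_min ha hb)]
    exact max_eq_right zero_le_one
  set h : ℝ → ℂ := fun x => cut x • f x with hh
  have hzero_left : ∀ x, x ≤ δ → h x = 0 := by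
    intro x hx
    have : cut x = 0 := by
      have ha : (x - δ)/δ ≤ 0 := div_nonpos_of_nonpos_of_nonneg (by linarith) hδ0.le
      simp only [hcut]
      refine max_eq_left ?_
      exact le_trans (le_trans (min_le_right _ _) (min_le_left _ _)) ha
    simp [hh, this]
  have hzero_right : ∀ x, 1 - δ ≤ x → h x = 0 := by
    intro x hx
    have : cut x = 0 := by
      have hb : (1 - δ - x)/δ ≤ 0 := div_nonpos_of_nonpos_of_nonneg (by linarith) hδ0.le
      simp only [hcut]
      refine max_eq_left ?_
      exact le_trans (le_trans (min_le_right _ _) (min_le_right _ _)) hb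
    simp [hh, this]
  have hhc : Continuous h := (hcutc.smul hf : Continuous h)
  have hhcs : HasCompactSupport h := by
    apply hc.mono
    intro x hx
    simp only [hh, Function.mem_support] at hx ⊢
    exact fun h0 => hx (by simp [h0])
  refine ⟨h, δ, hδ0, hδ2, hhc, hhcs, hzero_left, hzero_right, ?_⟩
  -- pointwise bound by indicator
  set B : Set ℝ := (Set.Icc (2*δ) (1-2*δ))ᶜ with hB
  have hptwise : ∀ x, ‖(f - h) x‖ ≤ ‖B.indicator (fun _ => M) x‖ := by
    intro x
    by_cases hx : x ∈ B
    · rw [Set.indicator_of_mem hx]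
      have : ‖(f - h) x‖ = |1 - cut x| * ‖f x‖ := by
        simp only [Pi.sub_apply, hh]
        rw [show f x - cut x • f x = (1 - cut x) • f x by rw [sub_smul, one_smul]]
        rw [norm_smul, Real.norm_eq_abs]
      rw [this, Real.norm_eq_abs, abs_of_nonneg hM0]
      have h1 : |1 - cut x| ≤ 1 := by
        rcases hcut01 x with ⟨a, b⟩
        rw [abs_of_nonneg (by linarith)]; linarith
      calc |1 - cut x| * ‖f x‖ ≤ 1 * M := mul_le_mul h1 (hM x) (norm_nonneg _) zero_le_one
        _ = M := one_mul M
    · rw [Set.notMem_compl_iff] at hx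
      have : cut x = 1 := hcut_one x hx.1 hx.2
      simp [Pi.sub_apply, hh, this, Set.indicator_of_notMem, hx]
  have hbound : eLpNorm (f - h) 2 m01 ≤ eLpNorm (B.indicator (fun _ => M)) 2 m01 :=
    eLpNorm_mono hptwise
  have hBmeas : m01 B ≤ ENNReal.ofReal (4*δ) := by
    have : B ∩ Set.Ioo 0 1 ⊆ Set.Ioo 0 (2*δ) ∪ Set.Ioo (1-2*δ) 1 := by
      rintro x ⟨hxB, hx0, hx1⟩
      simp only [hB, Set.mem_compl_iff, Set.mem_Icc, not_and_or, not_le] at hxB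
      rcases hxB with h | h
      · exact Or.inl ⟨hx0, h⟩
      · exact Or.inr ⟨h, hx1⟩
    calc m01 B = volume (B ∩ Set.Ioo 0 1) := by
          rw [m01, Measure.restrict_apply']; exact measurableSet_Ioo
      _ ≤ volume (Set.Ioo 0 (2*δ) ∪ Set.Ioo (1-2*δ) 1) := measure_mono this
      _ ≤ volume (Set.Ioo (0:ℝ) (2*δ)) + volume (Set.Ioo (1-2*δ) 1) := measure_union_le _ _
      _ = ENNReal.ofReal (2*δ) + ENNReal.ofReal (2*δ) := by
          rw [Real.volume_Ioo, Real.volume_Ioo]; ring_nf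
      _ = ENNReal.ofReal (4*δ) := by
          rw [← ENNReal.ofReal_add (by linarith) (by linarith)]; ring_nf
  calc eLpNorm (f - h) 2 m01 ≤ eLpNorm (B.indicator (fun _ => M)) 2 m01 := hbound
    _ ≤ ‖M‖₊ * (m01 B) ^ (1/(2:ℝ≥0∞).toReal) := eLpNorm_indicator_const_le _ _
    _ ≤ ENNReal.ofReal M * (ENNReal.ofReal (4*δ)) ^ ((1:ℝ)/2) := by
        gcongr
        · exact le_of_eq (by rw [← enorm_eq_nnnorm, ← ofReal_norm_eq_enorm, Real.norm_eq_abs,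
            abs_of_nonneg hM0])
        · exact ENNReal.rpow_le_rpow hBmeas (by norm_num)
    _ = ENNReal.ofReal (M * (4*δ) ^ ((1:ℝ)/2)) := by
        rw [ENNReal.ofReal_rpow_of_nonneg (by linarith) (by norm_num),
          ENNReal.ofReal_mul hM0]
    _ ≤ ENNReal.ofReal ε := by
        apply ENNReal.ofReal_le_ofReal
        have h4δ : 4*δ ≤ t^2 := by
          have := min_le_right (1/8 : ℝ) (t^2/4)
          calc 4*δ ≤ 4*(t^2/4) := by have := min_le_right (1/8 : ℝ) (t^2/4); simp only [hδ]; linarith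
            _ = t^2 := by ring
        have hrpow : (4*δ) ^ ((1:ℝ)/2) ≤ t := by
          calc (4*δ) ^ ((1:ℝ)/2) ≤ (t^2) ^ ((1:ℝ)/2) :=
                Real.rpow_le_rpow (by linarith) h4δ (by norm_num)
            _ = t := by
                rw [← Real.rpow_natCast t 2, ← Real.rpow_mul ht0.le]
                norm_num
        calc M * (4*δ) ^ ((1:ℝ)/2) ≤ M * t := by
              apply mul_le_mul_of_nonneg_left hrpow hM0
          _ = M * ε / (M+1) := by rw [ht]; ring
          _ ≤ ε := by
              rw [div_le_iff₀ (by linarith)]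
              nlinarith

open scoped Convolution

-- Step C: mollification
lemma approx_smooth {h : ℝ → ℂ} (hhc : Continuous h) (hcs : HasCompactSupport h)
    {δ : ℝ} (hδ0 : 0 < δ) (hδ2 : δ < 1/2)
    (hz1 : ∀ x, x ≤ δ → h x = 0) (hz2 : ∀ x, 1 - δ ≤ x → h x = 0)
    {ε : ℝ} (hε : 0 < ε) :
    ∃ g : ℝ → ℂ, ContDiff ℝ ((⊤:ℕ∞)) g ∧ HasCompactSupport g ∧ tsupport g ⊆ Set.Ioo 0 1 ∧
      eLpNorm (h - g) 2 m01 ≤ ENNReal.ofReal ε := by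
  obtain ⟨r, hr0, hr⟩ := Metric.uniformContinuous_iff.mp
    (hcs.uniformContinuous_of_continuous hhc) ε hε
  set ρ : ℝ := min (δ/2) r with hρ
  have hρ0 : 0 < ρ := lt_min (by linarith) hr0
  set φ : ContDiffBump (0:ℝ) := ⟨ρ/2, ρ, by linarith, by linarith⟩ with hφ
  set g : ℝ → ℂ := (φ.normed volume) ⋆[ContinuousLinearMap.lsmul ℝ ℝ, volume] h with hg
  have hsmooth : ContDiff ℝ ((⊤:ℕ∞)) g :=
    HasCompactSupport.contDiff_convolution_left _ φ.hasCompactSupport_normed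
      φ.contDiff_normed (hhc.locallyIntegrable)
  have hsupp : Function.support g ⊆ Set.Icc (δ/2) (1 - δ/2) := by
    intro x hx
    have := support_convolution_subset (L := ContinuousLinearMap.lsmul ℝ ℝ)
      (μ := volume) (f := φ.normed volume) (g := h) hx
    rw [φ.support_normed_eq] at this
    obtain ⟨a, ha, b, hb, rfl⟩ := this
    rw [Metric.mem_ball, dist_zero_right, Real.norm_eq_abs] at ha
    have hb1 : δ < b := by
      by_contra hcon
      exact (Function.mem_support.1 hb) (hz1 b (not_lt.1 hcon))
    have hb2 : b < 1 - δ := by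
      by_contra hcon
      exact (Function.mem_support.1 hb) (hz2 b (not_lt.1 hcon))
    have hρδ : ρ ≤ δ/2 := min_le_left _ _
    have := abs_lt.1 ha
    constructor <;> simp only [hφ] at this ⊢ <;> nlinarith [this.1, this.2]
  have htsupp : tsupport g ⊆ Set.Ioo 0 1 := by
    refine subset_trans (closure_minimal hsupp isClosed_Icc) ?_
    intro x hx
    exact ⟨by linarith [hx.1], by linarith [hx.2]⟩
  have hgcs : HasCompactSupport g :=
    IsCompact.of_isClosed_subset isCompact_Icc (isClosed_tsupport g)
      (closure_minimal hsupp isClosed_Icc)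
  refine ⟨g, hsmooth, hgcs, htsupp, ?_⟩
  have hdist : ∀ x, ‖(h - g) x‖ ≤ ε := by
    intro x
    have := φ.dist_normed_convolution_le (μ := volume) hhc.aestronglyMeasurable
      (x₀ := x) (ε := ε) ?_
    · rw [Pi.sub_apply, ← dist_eq_norm, dist_comm]
      exact le_trans (le_of_eq (by rw [hg])) this
    · intro y hy
      rw [Metric.mem_ball] at hy
      exact (hr (lt_of_lt_of_le hy (min_le_right _ _))).le
  calc eLpNorm (h - g) 2 m01 ≤ m01 Set.univ ^ (2:ℝ≥0∞).toReal⁻¹ * ENNReal.ofReal ε :=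
        eLpNorm_le_of_ae_bound (Eventually.of_forall hdist)
    _ = ENNReal.ofReal ε := by rw [m01_univ, ENNReal.one_rpow, one_mul]

-- Full approximation: smooth compactly supported in (0,1) are dense in L²(0,1)
lemma approx_total (Y : Lp ℂ 2 m01) {ε : ℝ} (hε : 0 < ε) :
    ∃ g : ℝ → ℂ, ContDiff ℝ ((⊤:ℕ∞)) g ∧ HasCompactSupport g ∧ tsupport g ⊆ Set.Ioo 0 1 ∧
      eLpNorm ((Y : ℝ → ℂ) - g) 2 m01 < ENNReal.ofReal ε := by
  have hε4 : 0 < ε/4 := by linarith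
  obtain ⟨f, hfc, hfcs, hf⟩ := approx_continuous Y
    (by simp [ENNReal.ofReal_eq_zero, not_le, hε4] : ENNReal.ofReal (ε/4) ≠ 0)
  obtain ⟨h, δ, hδ0, hδ2, hhc, hhcs, hz1, hz2, hfh⟩ := approx_cutoff hfc hfcs hε4
  obtain ⟨g, hgs, hgcs, hgsupp, hhg⟩ := approx_smooth hhc hhcs hδ0 hδ2 hz1 hz2 hε4
  refine ⟨g, hgs, hgcs, hgsupp, ?_⟩
  have hsplit : (Y : ℝ → ℂ) - g = ((Y : ℝ → ℂ) - f) + (f - h) + (h - g) := by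
    ext x
    simp only [Pi.sub_apply, Pi.add_apply]
    ring
  calc eLpNorm ((Y : ℝ → ℂ) - g) 2 m01
      = eLpNorm (((Y : ℝ → ℂ) - f) + (f - h) + (h - g)) 2 m01 := by rw [hsplit]
    _ ≤ eLpNorm (((Y : ℝ → ℂ) - f) + (f - h)) 2 m01 + eLpNorm (h - g) 2 m01 := by
        apply eLpNorm_add_le _ _ (by norm_num : (1:ℝ≥0∞) ≤ 2)
        · exact ((Lp.memLp Y).aestronglyMeasurable.sub hfc.aestronglyMeasurable.restrict).add
            (hfc.aestronglyMeasurable.restrict.sub hhc.aestronglyMeasurable.restrict)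
        · exact hhc.aestronglyMeasurable.restrict.sub
            (hgs.continuous.aestronglyMeasurable.restrict)
    _ ≤ eLpNorm ((Y : ℝ → ℂ) - f) 2 m01 + eLpNorm (f - h) 2 m01 + eLpNorm (h - g) 2 m01 := by
        gcongr
        apply eLpNorm_add_le _ _ (by norm_num : (1:ℝ≥0∞) ≤ 2)
        · exact (Lp.memLp Y).aestronglyMeasurable.sub hfc.aestronglyMeasurable.restrict
        · exact hfc.aestronglyMeasurable.restrict.sub hhc.aestronglyMeasurable.restrict
    _ ≤ ENNReal.ofReal (ε/4) + ENNReal.ofReal (ε/4) + ENNReal.ofReal (ε/4) := by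
        gcongr
    _ = ENNReal.ofReal (3*ε/4) := by
        rw [← ENNReal.ofReal_add hε4.le hε4.le, ← ENNReal.ofReal_add (by linarith) hε4.le]
        ring_nf
    _ < ENNReal.ofReal ε := by
        rw [ENNReal.ofReal_lt_ofReal_iff hε]; linarith

lemma memL2_mul {a : ℝ → ℂ} (ha : MemLp a ⊤ m01) {f : ℝ → ℂ} (hf : MemLp f 2 m01) :
    MemLp (fun x => a x * f x) 2 m01 := by
  have := hf.mul' (p := ⊤) (r := 2) ha
  simpa [Pi.smul_apply', smul_eq_mul] using this

/-- The graph of the Hain-Lüst operator `A_{αβ}`: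
`(Y,Z)` lies in the domain (i.e. `Y` has an `H²(0,1)` representative `y` — `y` is `C¹` on
`[0,1]` with absolutely continuous derivative whose a.e. derivative `y''` is in `L²` —
satisfying the boundary conditions) and `(F,G) = A_{αβ}(Y,Z)`. -/
def HLGraph (q u w : ℝ → ℂ) (α β : ℝ)
    (Y Z F G : Lp ℂ 2 m01) : Prop :=
  ∃ y y' y'' : ℝ → ℂ,
    -- `y` is differentiable on `[0,1]` with derivative `y'`
    (∀ t ∈ Set.Icc (0:ℝ) 1, HasDerivWithinAt y (y' t) (Set.Icc (0:ℝ) 1) t) ∧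
    -- `y` is continuously differentiable
    ContinuousOn y' (Set.Icc (0:ℝ) 1) ∧
    -- `y'` is absolutely continuous with a.e. derivative `y''`
    (∀ t ∈ Set.Icc (0:ℝ) 1, y' t = y' 0 + ∫ s in (0:ℝ)..t, y'' s) ∧
    -- `y'' ∈ L²(0,1)`
    MemLp y'' 2 m01 ∧
    -- boundary conditions `y'(1) + cot β · y(1) = 0` and `y'(0) + cot α · y(0) = 0`
    (y' 1 + (((Real.cos β / Real.sin β : ℝ) : ℂ)) * y 1 = 0) ∧
    (y' 0 + (((Real.cos α / Real.sin α : ℝ) : ℂ)) * y 0 = 0) ∧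
    (Y : ℝ → ℂ) =ᵐ[m01] y ∧
    -- the action `A_{αβ}(y,z) = (−y'' + q y + w z, w y + u z)`
    (F : ℝ → ℂ) =ᵐ[m01] (fun x => -(y'' x) + q x * y x + w x * Z x) ∧
    (G : ℝ → ℂ) =ᵐ[m01] (fun x => w x * y x + u x * Z x)


lemma graph_smooth (q u w : ℝ → ℂ)
    (hq : MemLp q ⊤ m01) (hu : MemLp u ⊤ m01) (hw : MemLp w ⊤ m01) (α β : ℝ)
    {g : ℝ → ℂ} (hgs : ContDiff ℝ ((⊤:ℕ∞)) g) (hgcs : HasCompactSupport g)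
    (hsupp : tsupport g ⊆ Set.Ioo 0 1) (Z : Lp ℂ 2 m01) :
    ∃ (gL F G : Lp ℂ 2 m01), ((gL : ℝ → ℂ) =ᵐ[m01] g) ∧
      ((G : ℝ → ℂ) =ᵐ[m01] fun x => w x * g x + u x * (Z : ℝ → ℂ) x) ∧
      HLGraph q u w α β gL Z F G := by
  have h1top : (1:WithTop ℕ∞) ≤ ((⊤:ℕ∞):WithTop ℕ∞) := by exact_mod_cast le_top
  have hdiff : Differentiable ℝ g := hgs.differentiable (by simp)
  have hg' : ContDiff ℝ ((⊤:ℕ∞)) (deriv g) := (contDiff_infty_iff_deriv.1 hgs).2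
  have hdiff' : Differentiable ℝ (deriv g) := hg'.differentiable (by simp)
  have hg''c : Continuous (deriv (deriv g)) := hg'.continuous_deriv h1top
  have hg''cs : HasCompactSupport (deriv (deriv g)) := hgcs.deriv.deriv
  have hg''mem : MemLp (deriv (deriv g)) 2 m01 := memL2_of_continuous_compact hg''c hg''cs
  have hgmem : MemLp g 2 m01 := memL2_of_continuous_compact hgs.continuous hgcs
  have h0 : (0:ℝ) ∉ tsupport g := fun h => by simpa using (hsupp h).1
  have h1 : (1:ℝ) ∉ tsupport g := fun h => by simpa using (hsupp h).2
  have h0' : (0:ℝ) ∉ tsupport (deriv g) :=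
    fun h => h0 (closure_minimal (support_deriv_subset) isClosed_closure h)
  have h1' : (1:ℝ) ∉ tsupport (deriv g) :=
    fun h => h1 (closure_minimal (support_deriv_subset) isClosed_closure h)
  have hF0 : MemLp (fun x => -(deriv (deriv g) x) + q x * g x + w x * (Z:ℝ→ℂ) x) 2 m01 :=
    (hg''mem.neg.add (memL2_mul hq hgmem)).add (memL2_mul hw (Lp.memLp Z))
  have hG0 : MemLp (fun x => w x * g x + u x * (Z:ℝ→ℂ) x) 2 m01 :=
    (memL2_mul hw hgmem).add (memL2_mul hu (Lp.memLp Z))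
  refine ⟨hgmem.toLp g, hF0.toLp _, hG0.toLp _, hgmem.coeFn_toLp, hG0.coeFn_toLp, ?_⟩
  refine ⟨g, deriv g, deriv (deriv g), ?_, ?_, ?_, hg''mem, ?_, ?_, hgmem.coeFn_toLp, ?_, ?_⟩
  · exact fun t _ => (hdiff t).hasDerivAt.hasDerivWithinAt
  · exact (hg'.continuous).continuousOn
  · intro t _
    have := intervalIntegral.integral_deriv_eq_sub
      (f := deriv g) (a := 0) (b := t) (fun x _ => hdiff' x)
      ((hg''c.intervalIntegrable 0 t))
    rw [this]; ring
  · rw [image_eq_zero_of_notMem_tsupport h1', image_eq_zero_of_notMem_tsupport h1]; ring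
  · rw [image_eq_zero_of_notMem_tsupport h0', image_eq_zero_of_notMem_tsupport h0]; ring
  · exact hF0.coeFn_toLp
  · exact hG0.coeFn_toLp

theorem stmt9 (q u w : ℝ → ℂ)
    (hq : MemLp q ⊤ m01) (hu : MemLp u ⊤ m01) (hw : MemLp w ⊤ m01)
    (α β : ℝ) (hα : Real.sin α ≠ 0) (hβ : Real.sin β ≠ 0)
    (lam : ℂ)
    -- `λ ∈ ρ(A_{αβ})`, with resolvent `R = (A_{αβ} − λ)⁻¹`
    (R : (Lp ℂ 2 m01 × Lp ℂ 2 m01) →L[ℂ] (Lp ℂ 2 m01 × Lp ℂ 2 m01))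
    (hR₁ : ∀ FG : Lp ℂ 2 m01 × Lp ℂ 2 m01,
      HLGraph q u w α β (R FG).1 (R FG).2
        (FG.1 + lam • (R FG).1) (FG.2 + lam • (R FG).2))
    (hR₂ : ∀ Y Z F G : Lp ℂ 2 m01,
      HLGraph q u w α β Y Z F G → R (F - lam • Y, G - lam • Z) = (Y, Z)) :
    -- the closure of the image under `(A_{αβ} − λ)⁻¹` of `L²(0,1) ⊕ L²(𝒲)`
    -- equals `L²(0,1) ⊕ L²(𝒲)`
    closure (R '' {FG : Lp ℂ 2 m01 × Lp ℂ 2 m01 |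
        ∀ᵐ x ∂m01, w x = 0 → (FG.2 : ℝ → ℂ) x = 0}) =
      {FG : Lp ℂ 2 m01 × Lp ℂ 2 m01 |
        ∀ᵐ x ∂m01, w x = 0 → (FG.2 : ℝ → ℂ) x = 0} := by
  set S : Set (Lp ℂ 2 m01 × Lp ℂ 2 m01) :=
    {FG | ∀ᵐ x ∂m01, w x = 0 → (FG.2 : ℝ → ℂ) x = 0} with hS
  -- measurable version of w
  set W : ℝ → ℂ := hw.aestronglyMeasurable.mk w with hW
  have hWsm : StronglyMeasurable W := hw.aestronglyMeasurable.stronglyMeasurable_mk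
  have hwW : w =ᵐ[m01] W := hw.aestronglyMeasurable.ae_eq_mk
  set E : Set ℝ := W ⁻¹' {0} with hE
  have hEm : MeasurableSet E := hWsm.measurable (measurableSet_singleton 0)
  -- membership criterion
  have hSiff : ∀ Z : Lp ℂ 2 m01,
      ((∀ᵐ x ∂m01, w x = 0 → (Z : ℝ → ℂ) x = 0) ↔ (Z : ℝ → ℂ) =ᵐ[m01.restrict E] 0) := by
    intro Z
    have hrfl : ((Z : ℝ → ℂ) =ᵐ[m01.restrict E] 0) ↔
        (∀ᵐ x ∂m01, x ∈ E → (Z : ℝ → ℂ) x = 0) := by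
      constructor
      · intro h
        filter_upwards [(ae_restrict_iff' hEm).1 h] with x hx
        simpa using hx
      · intro h
        apply (ae_restrict_iff' hEm).2
        filter_upwards [h] with x hx
        simpa using hx
    rw [hrfl]
    constructor
    · intro h
      filter_upwards [h, hwW] with x h1 h2 h3
      refine h1 ?_
      rw [h2]
      simpa [hE] using h3
    · intro h
      filter_upwards [h, hwW] with x h1 h2 h3
      refine h1 ?_
      simp only [hE, Set.mem_preimage, Set.mem_singleton_iff]
      rw [← h2]; exact h3
  -- S is closed
  have hclosed : IsClosed S := by
    apply IsSeqClosed.isClosed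
    intro FGn FG hmem hlim
    rw [hS, Set.mem_setOf_eq, hSiff]
    have haesm : AEStronglyMeasurable (FG.2 : ℝ → ℂ) (m01.restrict E) :=
      (Lp.memLp FG.2).aestronglyMeasurable.restrict
    rw [← eLpNorm_eq_zero_iff haesm (by norm_num : (2:ℝ≥0∞) ≠ 0)]
    have hbound : ∀ n, eLpNorm (FG.2 : ℝ → ℂ) 2 (m01.restrict E) ≤
        ENNReal.ofReal ‖FG.2 - (FGn n).2‖ := by
      intro n
      have hZn : ((FGn n).2 : ℝ → ℂ) =ᵐ[m01.restrict E] 0 := (hSiff _).1 (hmem n)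
      have hsplit : (FG.2 : ℝ → ℂ) =ᵐ[m01.restrict E]
          ((FG.2 : ℝ → ℂ) - ((FGn n).2 : ℝ → ℂ)) := by
        filter_upwards [hZn] with x hx
        simp [hx]
      calc eLpNorm (FG.2 : ℝ → ℂ) 2 (m01.restrict E)
          = eLpNorm ((FG.2 : ℝ → ℂ) - ((FGn n).2 : ℝ → ℂ)) 2 (m01.restrict E) :=
            eLpNorm_congr_ae hsplit
        _ ≤ eLpNorm ((FG.2 : ℝ → ℂ) - ((FGn n).2 : ℝ → ℂ)) 2 m01 :=
            eLpNorm_mono_measure _ Measure.restrict_le_self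
        _ = eLpNorm ((FG.2 - (FGn n).2 : Lp ℂ 2 m01) : ℝ → ℂ) 2 m01 :=
            (eLpNorm_congr_ae (Lp.coeFn_sub _ _)).symm
        _ = ENNReal.ofReal ‖FG.2 - (FGn n).2‖ := by
            rw [Lp.norm_def, ENNReal.ofReal_toReal (Lp.eLpNorm_ne_top _)]
    have htendsto : Tendsto (fun n => ENNReal.ofReal ‖FG.2 - (FGn n).2‖) atTop (𝓝 0) := by
      have h2 : Tendsto (fun n => (FGn n).2) atTop (𝓝 FG.2) :=
        (continuous_snd.tendsto FG).comp hlim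
      have h3 : Tendsto (fun n => ‖FG.2 - (FGn n).2‖) atTop (𝓝 0) := by
        have := tendsto_iff_norm_sub_tendsto_zero.1 h2
        simpa [norm_sub_rev] using this
      have := (ENNReal.continuous_ofReal.tendsto 0).comp h3
      simpa only [Function.comp_def, ENNReal.ofReal_zero] using this
    exact le_zero_iff.1 (ge_of_tendsto' htendsto hbound)
  -- image is contained in S
  have himage : R '' S ⊆ S := by
    rintro P ⟨FG, hFG, rfl⟩
    set Y := (R FG).1 with hY
    set Z := (R FG).2 with hZ
    obtain ⟨y, y', y'', _, _, _, _, _, _, _, _, hG⟩ := hR₁ FG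
    -- extract pointwise identity for second component
    have hGpt : ∀ᵐ x ∂m01, (FG.2 : ℝ → ℂ) x + lam * (Z : ℝ → ℂ) x
        = w x * y x + u x * (Z : ℝ → ℂ) x := by
      filter_upwards [hG, Lp.coeFn_add FG.2 (lam • Z), Lp.coeFn_smul lam Z] with x h1 h2 h3
      rw [← h1, h2]
      simp only [Pi.add_apply, h3, Pi.smul_apply, smul_eq_mul]
    -- the indicator of Z on E
    set ζ : ℝ → ℂ := E.indicator (fun x => (Z : ℝ → ℂ) x) with hζdef
    have hζ : MemLp ζ 2 m01 := MemLp.indicator hEm (Lp.memLp Z)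
    set Z' : Lp ℂ 2 m01 := hζ.toLp ζ with hZ'
    have hgraph : HLGraph q u w α β 0 Z' 0 (lam • Z') := by
      refine ⟨(fun _ => 0), (fun _ => 0), (fun _ => 0), ?_, continuousOn_const, ?_, ?_, ?_, ?_,
        ?_, ?_, ?_⟩
      · exact fun t _ => hasDerivWithinAt_const t _ 0
      · intro t _; simp
      · exact memLp_const 0
      · simp
      · simp
      · exact Lp.coeFn_zero ℂ 2 m01
      · -- F equation
        filter_upwards [Lp.coeFn_zero ℂ 2 m01, hζ.coeFn_toLp, hwW] with x h1 h2 h3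
        rw [h1]
        by_cases hx : x ∈ E
        · have : w x = 0 := by
            rw [h3]; simpa [hE] using hx
          simp [h2, this]
        · have : ζ x = 0 := Set.indicator_of_notMem hx _
          simp [hZ', h2, this]
      · -- G equation
        filter_upwards [Lp.coeFn_smul lam Z', hζ.coeFn_toLp, hwW, hGpt, hFG] with x h1 h2 h3 h4 h5
        rw [h1]
        simp only [Pi.smul_apply, hZ', h2, smul_eq_mul]
        by_cases hx : x ∈ E
        · have hwx : w x = 0 := by rw [h3]; simpa [hE] using hx
          have hFG2 : (FG.2 : ℝ → ℂ) x = 0 := h5 hwx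
          have : lam * (Z : ℝ → ℂ) x = u x * (Z : ℝ → ℂ) x := by
            rw [hFG2, hwx] at h4; simpa using h4
          have hζx : ζ x = (Z : ℝ → ℂ) x := Set.indicator_of_mem hx _
          rw [hζx, this, hwx]
          ring
        · have hζx : ζ x = 0 := Set.indicator_of_notMem hx _
          simp [hζx]
    have hkey := hR₂ 0 Z' 0 (lam • Z') hgraph
    have hin : ((0:Lp ℂ 2 m01) - lam • (0:Lp ℂ 2 m01), lam • Z' - lam • Z')
        = ((0:Lp ℂ 2 m01), (0:Lp ℂ 2 m01)) := by simp
    rw [hin, show ((0:Lp ℂ 2 m01), (0:Lp ℂ 2 m01)) = (0 : Lp ℂ 2 m01 × Lp ℂ 2 m01) from rfl,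
      map_zero] at hkey
    have hZ'0 : Z' = 0 := by
      have := congrArg Prod.snd hkey
      simpa using this.symm
    have hζ0 : ζ =ᵐ[m01] 0 := by
      have h1 : ζ =ᵐ[m01] (Z' : ℝ → ℂ) := hζ.coeFn_toLp.symm
      rw [hZ'0] at h1
      exact h1.trans (Lp.coeFn_zero ℂ 2 m01)
    rw [hS, Set.mem_setOf_eq]
    filter_upwards [hζ0, hwW] with x h1 h2 h3
    have hx : x ∈ E := by
      simp only [hE, Set.mem_preimage, Set.mem_singleton_iff]
      rw [← h2]; exact h3
    have : ζ x = (Z : ℝ → ℂ) x := Set.indicator_of_mem hx _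
    rw [← this]
    exact h1
  -- S is contained in the closure of the image
  have hsub : S ⊆ closure (R '' S) := by
    intro FG hFG
    rw [Metric.mem_closure_iff]
    intro ε hε
    obtain ⟨g, hgs, hgcs, hgsupp, hgclose⟩ := approx_total FG.1 hε
    obtain ⟨gL, F, G, hgL, hGfn, hgraph⟩ := graph_smooth q u w hq hu hw α β hgs hgcs hgsupp FG.2
    have hkey := hR₂ gL FG.2 F G hgraph
    refine ⟨(gL, FG.2), ⟨(F - lam • gL, G - lam • FG.2), ?_, hkey⟩, ?_⟩
    · -- the preimage pair is in S
      rw [hS, Set.mem_setOf_eq]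
      filter_upwards [Lp.coeFn_sub G (lam • FG.2), Lp.coeFn_smul lam FG.2, hGfn, hFG]
        with x h1 h2 h3 h4 h5
      simp only [h1, Pi.sub_apply, h2, Pi.smul_apply, smul_eq_mul, h3]
      rw [h4 h5, h5]
      ring
    · -- distance estimate
      have hdist2 : dist FG.2 FG.2 = 0 := dist_self _
      have h1 : dist FG (gL, FG.2) = dist FG.1 gL := by
        rw [Prod.dist_eq]
        rcases FG with ⟨F1, F2⟩
        simp [hdist2, dist_nonneg]
      rw [h1, dist_eq_norm]
      have h2 : ‖FG.1 - gL‖ = (eLpNorm ((FG.1 : ℝ → ℂ) - g) 2 m01).toReal := by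
        rw [Lp.norm_def]
        congr 1
        apply eLpNorm_congr_ae
        filter_upwards [Lp.coeFn_sub FG.1 gL, hgL] with x ha hb
        rw [ha, Pi.sub_apply, hb, Pi.sub_apply]
      rw [h2]
      have := hgclose
      exact lt_of_lt_of_le (ENNReal.toReal_lt_of_lt_ofReal this) le_rfl
  exact le_antisymm (closure_minimal (Set.image_subset_iff.2 (fun x hx =>
    Set.mem_preimage.2 (himage (Set.mem_image_of_mem _ hx)))) hclosed) hsub
end

section
/- The subspaces H₁ := L²(0,1) ⊕ L²(𝒲) and H₂ := {0} ⊕ L²((0,1)∖𝒲) reduce A_{αβ}: if (y,z) belongs to the domain of A_{αβ}, then (y, χ_𝒲·z) belongs to the domain of A_{αβ} and A_{αβ}(y, χ_𝒲·z) ∈ H₁, and (0, χ_{(0,1)∖𝒲}·z) belongs to the domain of A_{αβ} and A_{αβ}(0, χ_{(0,1)∖𝒲}·z) ∈ H₂; here χ_E denotes the indicator function of the set E. -/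
set_option maxHeartbeats 1000000

open MeasureTheory Filter

theorem stmt10 (q u w : ℝ → ℂ)
    (hq : MemLp q ⊤ m01) (hu : MemLp u ⊤ m01) (hw : MemLp w ⊤ m01)
    (α β : ℝ) (hα : Real.sin α ≠ 0) (hβ : Real.sin β ≠ 0) :
    ∀ Y Z F G : Lp ℂ 2 m01, HLGraph q u w α β Y Z F G →
      -- `(Y, χ_𝒲 · Z)` lies in the domain of `A_{αβ}` and its image lies in
      -- `H₁ = L²(0,1) ⊕ L²(𝒲)`
      (∀ Z₁ : Lp ℂ 2 m01,
        (Z₁ : ℝ → ℂ) =ᵐ[m01] (fun x => if w x = 0 then 0 else Z x) →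
          ∃ F₁ G₁ : Lp ℂ 2 m01, HLGraph q u w α β Y Z₁ F₁ G₁ ∧
            (∀ᵐ x ∂m01, w x = 0 → (G₁ : ℝ → ℂ) x = 0)) ∧
      -- `(0, χ_{(0,1)∖𝒲} · Z)` lies in the domain of `A_{αβ}` and its image lies in
      -- `H₂ = {0} ⊕ L²((0,1)∖𝒲)`
      (∀ Z₂ : Lp ℂ 2 m01,
        (Z₂ : ℝ → ℂ) =ᵐ[m01] (fun x => if w x = 0 then Z x else 0) →
          ∃ F₂ G₂ : Lp ℂ 2 m01, HLGraph q u w α β 0 Z₂ F₂ G₂ ∧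
            ((F₂ : ℝ → ℂ) =ᵐ[m01] 0) ∧
            (∀ᵐ x ∂m01, w x ≠ 0 → (G₂ : ℝ → ℂ) x = 0)) := by
  intro Y Z F G hG
  obtain ⟨y, y', y'', hder, hcont, hac, hy'', hbβ, hbα, hY, hF, hGg⟩ := hG
  have hy : MemLp y 2 m01 := (Lp.memLp Y).ae_eq hY
  constructor
  · intro Z₁ hZ₁
    -- G₁ := w y + u Z₁
    have hg₁ : MemLp (fun x => w x * y x + u x * Z₁ x) 2 m01 := by
      have h1 : MemLp (w • y) 2 m01 := hy.smul hw
      have h2 : MemLp (u • ((Z₁ : ℝ → ℂ))) 2 m01 := (Lp.memLp Z₁).smul hu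
      have h3 : MemLp (w • y + u • ((Z₁ : ℝ → ℂ))) 2 m01 := h1.add h2
      exact h3
    refine ⟨F, hg₁.toLp _, ⟨y, y', y'', hder, hcont, hac, hy'', hbβ, hbα, hY, ?_, ?_⟩, ?_⟩
    · refine hF.trans ?_
      filter_upwards [hZ₁] with x hx
      by_cases hwx : w x = 0
      · simp [hwx, hx]
      · simp [hx, hwx]
    · exact hg₁.coeFn_toLp
    · filter_upwards [hg₁.coeFn_toLp, hZ₁] with x hx hzx hwx
      rw [hx, hzx]
      simp [hwx]
  · intro Z₂ hZ₂
    have hg₂ : MemLp (fun x => w x * (0:ℂ) + u x * (Z₂ : ℝ → ℂ) x) 2 m01 := by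
      have h2 : MemLp (u • ((Z₂ : ℝ → ℂ))) 2 m01 := (Lp.memLp Z₂).smul hu
      exact h2.ae_eq (Eventually.of_forall fun x => by
        show u x * (Z₂ : ℝ → ℂ) x = _; ring)
    refine ⟨0, hg₂.toLp _, ⟨(fun _ => 0), (fun _ => 0), (fun _ => 0), ?_, ?_, ?_, ?_, ?_, ?_, ?_, ?_, ?_⟩, ?_, ?_⟩
    · intro t ht; simpa using (hasDerivWithinAt_const t _ (0:ℂ))
    · exact continuousOn_const
    · intro t ht; simp
    · exact (MemLp.zero : MemLp (0 : ℝ → ℂ) 2 m01)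
    · simp
    · simp
    · exact Lp.coeFn_zero ℂ 2 m01
    · refine (Lp.coeFn_zero ℂ 2 m01).trans ?_
      filter_upwards [hZ₂] with x hx
      by_cases hwx : w x = 0
      · simp [hwx]
      · simp [hx, hwx]
    · refine hg₂.coeFn_toLp.trans ?_
      filter_upwards with x; rfl
    · exact Lp.coeFn_zero ℂ 2 m01
    · filter_upwards [hg₂.coeFn_toLp, hZ₂] with x hx hzx hwx
      rw [hx, hzx]
      simp [hwx]
end

section
/- For each choice of sign ±: the set of g ∈ L²(ℝ) for which there exists c ∈ ℂ with (x ↦ x g(x) − c) ∈ L²(ℝ) and x g(x) − c = ±i·g(x) for almost every x ∈ ℝ is exactly the set of scalar multiples of the function x ↦ (x ∓ i)^{−1}; moreover, for g(x) = c₀·(x ∓ i)^{−1} the associated constant is c = c₀. In particular each of these two deficiency sets is a one-dimensional subspace of L²(ℝ). -/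
open MeasureTheory

private lemma stmt13_hne (s : ℝ) (hs : s = 1 ∨ s = -1) (x : ℝ) :
    (x : ℂ) - (s : ℂ) * Complex.I ≠ 0 := by
  intro h
  have him := congrArg Complex.im h
  simp at him
  rcases hs with rfl | rfl <;> norm_num at him

private lemma stmt13_key (s : ℝ) (hs : s = 1 ∨ s = -1) (c₀ : ℂ) (x : ℝ) :
    (x : ℂ) * (c₀ * ((x : ℂ) - (s : ℂ) * Complex.I)⁻¹) - c₀ =
      (s : ℂ) * Complex.I * (c₀ * ((x : ℂ) - (s : ℂ) * Complex.I)⁻¹) := by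
  field_simp [stmt13_hne s hs x]
  ring

private lemma stmt13_memh (s : ℝ) (hs : s = 1 ∨ s = -1) :
    MemLp (fun x : ℝ => ((x : ℂ) - (s : ℂ) * Complex.I)⁻¹) 2 (volume : Measure ℝ) := by
  have hcont : Continuous (fun x : ℝ => ((x : ℂ) - (s : ℂ) * Complex.I)⁻¹) := by
    apply Continuous.inv₀
    · exact (Complex.continuous_ofReal.sub continuous_const)
    · exact fun x => stmt13_hne s hs x
  rw [memLp_two_iff_integrable_sq_norm hcont.aestronglyMeasurable]
  have heq : (fun x : ℝ => ‖((x : ℂ) - (s : ℂ) * Complex.I)⁻¹‖ ^ 2) =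
      fun x : ℝ => (1 + x ^ 2)⁻¹ := by
    funext x
    rw [norm_inv, inv_pow]
    congr 1
    rw [Complex.sq_norm]
    have hs2 : s ^ 2 = 1 := by rcases hs with rfl | rfl <;> norm_num
    simp [Complex.normSq_apply]
    nlinarith [hs2]
  rw [heq]
  exact integrable_inv_one_add_sq

theorem stmt13 (s : ℝ) (hs : s = 1 ∨ s = -1) :
    -- the deficiency set is exactly the set of scalar multiples of `x ↦ (x ∓ i)⁻¹`
    ({g : Lp ℂ 2 (volume : Measure ℝ) | ∃ c : ℂ,
        MemLp (fun x : ℝ => (x : ℂ) * g x - c) 2 (volume : Measure ℝ) ∧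
        ∀ᵐ x : ℝ, (x : ℂ) * g x - c = (s : ℂ) * Complex.I * g x} =
      {g : Lp ℂ 2 (volume : Measure ℝ) | ∃ c₀ : ℂ,
        (g : ℝ → ℂ) =ᵐ[(volume : Measure ℝ)]
          fun x : ℝ => c₀ * ((x : ℂ) - (s : ℂ) * Complex.I)⁻¹}) ∧
    -- for `g = c₀·(x ∓ i)⁻¹` the associated constant is `c = c₀`
    (∀ c₀ : ℂ,
      MemLp (fun x : ℝ => (x : ℂ) * (c₀ * ((x : ℂ) - (s : ℂ) * Complex.I)⁻¹) - c₀) 2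
        (volume : Measure ℝ) ∧
      ∀ x : ℝ, (x : ℂ) * (c₀ * ((x : ℂ) - (s : ℂ) * Complex.I)⁻¹) - c₀ =
        (s : ℂ) * Complex.I * (c₀ * ((x : ℂ) - (s : ℂ) * Complex.I)⁻¹)) ∧
    -- in particular the deficiency set is a one-dimensional subspace of `L²(ℝ)`
    (∃ g₀ : Lp ℂ 2 (volume : Measure ℝ), g₀ ≠ 0 ∧
      {g : Lp ℂ 2 (volume : Measure ℝ) | ∃ c : ℂ,
          MemLp (fun x : ℝ => (x : ℂ) * g x - c) 2 (volume : Measure ℝ) ∧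
          ∀ᵐ x : ℝ, (x : ℂ) * g x - c = (s : ℂ) * Complex.I * g x} =
        Set.range (fun a : ℂ => a • g₀)) := by
  have hne := stmt13_hne s hs
  have hmemh := stmt13_memh s hs
  have hset : ({g : Lp ℂ 2 (volume : Measure ℝ) | ∃ c : ℂ,
        MemLp (fun x : ℝ => (x : ℂ) * g x - c) 2 (volume : Measure ℝ) ∧
        ∀ᵐ x : ℝ, (x : ℂ) * g x - c = (s : ℂ) * Complex.I * g x} =
      {g : Lp ℂ 2 (volume : Measure ℝ) | ∃ c₀ : ℂ,
        (g : ℝ → ℂ) =ᵐ[(volume : Measure ℝ)]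
          fun x : ℝ => c₀ * ((x : ℂ) - (s : ℂ) * Complex.I)⁻¹}) := by
    ext g
    simp only [Set.mem_setOf_eq]
    constructor
    · rintro ⟨c, _, hae⟩
      refine ⟨c, ?_⟩
      filter_upwards [hae] with x hx
      have hc : c = ((x : ℂ) - (s : ℂ) * Complex.I) * g x := by linear_combination -hx
      rw [hc, mul_comm ((x : ℂ) - (s : ℂ) * Complex.I) (g x), mul_assoc, mul_inv_cancel₀ (hne x), mul_one]
    · rintro ⟨c₀, hae⟩
      refine ⟨c₀, ?_, ?_⟩
      · have haeq : (fun x : ℝ => (x : ℂ) * g x - c₀) =ᵐ[(volume : Measure ℝ)]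
            fun x : ℝ => (s : ℂ) * Complex.I * g x := by
          filter_upwards [hae] with x hx
          rw [hx]
          exact stmt13_key s hs c₀ x
        exact (((Lp.memLp g).const_mul ((s : ℂ) * Complex.I)).ae_eq haeq.symm)
      · filter_upwards [hae] with x hx
        rw [hx]
        exact stmt13_key s hs c₀ x
  refine ⟨hset, ?_, ?_⟩
  · intro c₀
    refine ⟨?_, fun x => stmt13_key s hs c₀ x⟩
    have heq : (fun x : ℝ => (x : ℂ) * (c₀ * ((x : ℂ) - (s : ℂ) * Complex.I)⁻¹) - c₀) =
        fun x : ℝ => ((s : ℂ) * Complex.I * c₀) * ((x : ℂ) - (s : ℂ) * Complex.I)⁻¹ := by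
      funext x
      rw [stmt13_key s hs c₀ x]; ring
    rw [heq]
    exact hmemh.const_mul _
  · refine ⟨hmemh.toLp _, ?_, ?_⟩
    · intro h0
      have hz : (fun x : ℝ => ((x : ℂ) - (s : ℂ) * Complex.I)⁻¹) =ᵐ[(volume : Measure ℝ)]
          (0 : ℝ → ℂ) := by
        have := (MemLp.coeFn_toLp hmemh).symm
        rw [h0] at this
        exact this.trans (Lp.coeFn_zero _ _ _)
      rcases hz.exists with ⟨x, hx⟩
      exact inv_ne_zero (hne x) hx
    · rw [hset]
      ext g
      simp only [Set.mem_setOf_eq, Set.mem_range]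
      constructor
      · rintro ⟨c₀, hae⟩
        refine ⟨c₀, ?_⟩
        apply (Lp.ext ?_).symm
        refine hae.trans (Filter.EventuallyEq.symm ((Lp.coeFn_smul c₀ _).trans ?_))
        filter_upwards [MemLp.coeFn_toLp hmemh] with x hx
        simp [hx]
      · rintro ⟨a, rfl⟩
        refine ⟨a, ?_⟩
        refine (Lp.coeFn_smul a _).trans ?_
        filter_upwards [MemLp.coeFn_toLp hmemh] with x hx
        simp [hx]
end

section
/- Let λ₀ ∈ ℂ with Im λ₀ ≠ 0 and suppose D(λ₀) = 0, i.e. ∫_ℝ ψ(x)·conj(φ(x))·(x−λ₀)^{−1} dx = −1. Then the function u(x) := ψ(x)·(x−λ₀)^{−1} belongs to L²(ℝ) and to D* with c_u = 0 (hence Γ₂u = 0), it satisfies ⟨u, φ⟩ = −1 and Ã*u = λ₀·u. In particular, if ψ ≠ 0 in L²(ℝ), then λ₀ is an eigenvalue of the restriction of Ã* to ker Γ₂, with eigenfunction x ↦ ψ(x)/(x−λ₀). -/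
open MeasureTheory Filter

/-- The (paper-convention) `L²(ℝ)` inner product `⟨f,g⟩ = ∫ f · conj g`,
linear in the first argument. -/
noncomputable def ip (f g : ℝ → ℂ) : ℂ :=
  ∫ x : ℝ, f x * (starRingEnd ℂ) (g x)

/-- The boundary operator `Γ₁`, evaluated on `g ∈ D*` with associated constant `c = c_g`:
`Γ₁ g = ∫_ℝ ( g(x) − c·sign(x)·(x²+1)^{−1/2} ) dx`. -/
noncomputable def Gam1 (g : ℝ → ℂ) (c : ℂ) : ℂ :=
  ∫ x : ℝ, (g x - c * ((Real.sign x : ℝ) : ℂ) * (((Real.sqrt (x ^ 2 + 1) : ℝ) : ℂ))⁻¹)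

lemma resolv_ne (lam₀ : ℂ) (hlam₀ : lam₀.im ≠ 0) (x : ℝ) : (x : ℂ) - lam₀ ≠ 0 := by
  intro h
  have : ((x : ℂ) - lam₀).im = 0 := by rw [h]; simp
  simp [Complex.sub_im] at this
  exact hlam₀ this

lemma resolv_bound (lam₀ : ℂ) (hlam₀ : lam₀.im ≠ 0) (x : ℝ) :
    ‖((x : ℂ) - lam₀)⁻¹‖ ≤ |lam₀.im|⁻¹ := by
  rw [norm_inv]
  have h1 : |lam₀.im| ≤ ‖(x : ℂ) - lam₀‖ := by
    have := Complex.abs_im_le_norm ((x : ℂ) - lam₀)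
    simpa [Complex.sub_im] using this
  have h2 : (0:ℝ) < |lam₀.im| := abs_pos.mpr hlam₀
  exact inv_anti₀ h2 h1

theorem stmt19 (φ ψ : ℝ → ℂ)
    (hφ : MemLp φ 2 (volume : Measure ℝ)) (hψ : MemLp ψ 2 (volume : Measure ℝ))
    (lam₀ : ℂ) (hlam₀ : lam₀.im ≠ 0)
    -- `D(λ₀) = 0`
    (hD : (∫ x : ℝ, ψ x * (starRingEnd ℂ) (φ x) * ((x : ℂ) - lam₀)⁻¹) = -1) :
    -- `u(x) := ψ(x)/(x − λ₀)` lies in `L²(ℝ)`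
    MemLp (fun x : ℝ => ψ x * ((x : ℂ) - lam₀)⁻¹) 2 (volume : Measure ℝ) ∧
    -- `u ∈ D*` with `c_u = 0` (hence `Γ₂ u = 0`)
    MemLp (fun x : ℝ => (x : ℂ) * (ψ x * ((x : ℂ) - lam₀)⁻¹) - 0) 2
      (volume : Measure ℝ) ∧
    -- `⟨u, φ⟩ = −1`
    ip (fun x : ℝ => ψ x * ((x : ℂ) - lam₀)⁻¹) φ = -1 ∧
    -- `Ã* u = λ₀ · u`
    (∀ x : ℝ,
      ((x : ℂ) * (ψ x * ((x : ℂ) - lam₀)⁻¹) - 0) +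
          ip (fun t : ℝ => ψ t * ((t : ℂ) - lam₀)⁻¹) φ * ψ x =
        lam₀ * (ψ x * ((x : ℂ) - lam₀)⁻¹)) ∧
    -- if `ψ ≠ 0` in `L²(ℝ)`, the eigenfunction `u` is nonzero, so `λ₀` is an
    -- eigenvalue of the restriction of `Ã*` to `ker Γ₂`
    (¬ ψ =ᵐ[(volume : Measure ℝ)] 0 →
      ¬ (fun x : ℝ => ψ x * ((x : ℂ) - lam₀)⁻¹) =ᵐ[(volume : Measure ℝ)] 0) := by
  have hne := resolv_ne lam₀ hlam₀
  have hcont : Continuous (fun x : ℝ => ((x : ℂ) - lam₀)⁻¹) := by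
    apply Continuous.inv₀
    · exact (Complex.continuous_ofReal.sub continuous_const)
    · exact hne
  have hmeas : AEStronglyMeasurable (fun x : ℝ => ψ x * ((x : ℂ) - lam₀)⁻¹)
      (volume : Measure ℝ) :=
    hψ.aestronglyMeasurable.mul hcont.aestronglyMeasurable
  have hu : MemLp (fun x : ℝ => ψ x * ((x : ℂ) - lam₀)⁻¹) 2 (volume : Measure ℝ) := by
    apply MemLp.of_le_mul hψ hmeas
    filter_upwards with x
    rw [norm_mul]
    calc ‖ψ x‖ * ‖((x : ℂ) - lam₀)⁻¹‖ ≤ ‖ψ x‖ * |lam₀.im|⁻¹ :=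
          mul_le_mul_of_nonneg_left (resolv_bound lam₀ hlam₀ x) (norm_nonneg _)
      _ = |lam₀.im|⁻¹ * ‖ψ x‖ := mul_comm _ _
  have hip : ip (fun x : ℝ => ψ x * ((x : ℂ) - lam₀)⁻¹) φ = -1 := by
    rw [← hD]
    unfold ip
    congr 1
    ext x
    ring
  refine ⟨hu, ?_, hip, ?_, ?_⟩
  · have heq : (fun x : ℝ => (x : ℂ) * (ψ x * ((x : ℂ) - lam₀)⁻¹) - 0) =
        fun x : ℝ => ψ x + lam₀ * (ψ x * ((x : ℂ) - lam₀)⁻¹) := by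
      ext x
      have := hne x
      field_simp
      ring
    rw [heq]
    exact hψ.add (hu.const_mul lam₀)
  · intro x
    rw [hip]
    have := hne x
    field_simp
    ring
  · intro hψ0 hu0
    apply hψ0
    filter_upwards [hu0] with x hx
    have : ψ x * ((x : ℂ) - lam₀)⁻¹ = 0 := hx
    rcases mul_eq_zero.mp this with h | h
    · exact h
    · exact absurd (inv_eq_zero.mp h) (hne x)
end
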